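/- Let C be a generalized Cartan matrix whose Dynkin diagram has no cycle (is a forest). Then C is symmetrizable. -/

import Mathlib

namespace Stmt13Aux

open SimpleGraph Walk

variable {n : ℕ}

/-- The edge ratio. -/
def r (a : Fin n → Fin n → ℤ) (i j : Fin n) : ℚ := (a i j : ℚ) / (a j i : ℚ)

/-- Weight of a walk: product of edge ratios. -/
def wt (a : Fin n → Fin n → ℤ) :
    ∀ {u v : Fin n}, (SimpleGraph.fromRel fun i j : Fin n => a i j ≠ 0).Walk u v → ℚ
  | _, _, .nil => 1
  | u, _, .cons (v := x) _ p => r a u x * wt a p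

theorem wt_nil (a : Fin n → Fin n → ℤ) {u : Fin n} :
    wt a (Walk.nil : (SimpleGraph.fromRel fun i j : Fin n => a i j ≠ 0).Walk u u) = 1 := rfl

theorem wt_cons (a : Fin n → Fin n → ℤ) {u x v : Fin n}
    (h : (SimpleGraph.fromRel fun i j : Fin n => a i j ≠ 0).Adj u x)
    (p : (SimpleGraph.fromRel fun i j : Fin n => a i j ≠ 0).Walk x v) :
    wt a (Walk.cons h p) = r a u x * wt a p := rfl

theorem wt_append (a : Fin n → Fin n → ℤ) {u v w : Fin n}
    (p : (SimpleGraph.fromRel fun i j : Fin n => a i j ≠ 0).Walk u v)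
    (q : (SimpleGraph.fromRel fun i j : Fin n => a i j ≠ 0).Walk v w) :
    wt a (p.append q) = wt a p * wt a q := by
  induction p with
  | nil => simp [wt_nil]
  | cons h p ih => rw [Walk.cons_append, wt_cons, wt_cons, ih]; ring

theorem wt_concat (a : Fin n → Fin n → ℤ) {u v w : Fin n}
    (p : (SimpleGraph.fromRel fun i j : Fin n => a i j ≠ 0).Walk u v)
    (h : (SimpleGraph.fromRel fun i j : Fin n => a i j ≠ 0).Adj v w) :
    wt a (p.concat h) = wt a p * r a v w := by
  rw [Walk.concat_eq_append, wt_append, wt_cons, wt_nil]; ring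

theorem wt_copy (a : Fin n → Fin n → ℤ) {u v u' v' : Fin n}
    (p : (SimpleGraph.fromRel fun i j : Fin n => a i j ≠ 0).Walk u v)
    (hu : u = u') (hv : v = v') :
    wt a (p.copy hu hv) = wt a p := by
  subst hu; subst hv; rfl

/-- Both entries of an adjacent pair are negative. -/
theorem entries_neg {a : Fin n → Fin n → ℤ}
    (hoff : ∀ i j, i ≠ j → a i j ≤ 0) (hzero : ∀ i j, a i j = 0 ↔ a j i = 0)
    {i j : Fin n} (h : (SimpleGraph.fromRel fun i j : Fin n => a i j ≠ 0).Adj i j) :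
    a i j < 0 ∧ a j i < 0 := by
  rw [SimpleGraph.fromRel_adj] at h
  obtain ⟨hne, hor⟩ := h
  have h1 : a i j ≠ 0 := by
    rcases hor with h' | h'
    · exact h'
    · exact fun hh => h' ((hzero j i).mpr hh)
  have h2 : a j i ≠ 0 := fun hh => h1 ((hzero i j).mpr hh)
  exact ⟨lt_of_le_of_ne (hoff i j hne) h1, lt_of_le_of_ne (hoff j i hne.symm) h2⟩

theorem r_pos {a : Fin n → Fin n → ℤ}
    (hoff : ∀ i j, i ≠ j → a i j ≤ 0) (hzero : ∀ i j, a i j = 0 ↔ a j i = 0)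
    {i j : Fin n} (h : (SimpleGraph.fromRel fun i j : Fin n => a i j ≠ 0).Adj i j) :
    0 < r a i j := by
  obtain ⟨h1, h2⟩ := entries_neg hoff hzero h
  have h1' : (a i j : ℚ) < 0 := by exact_mod_cast h1
  have h2' : (a j i : ℚ) < 0 := by exact_mod_cast h2
  exact div_pos_of_neg_of_neg h1' h2'

theorem r_mul_r {a : Fin n → Fin n → ℤ}
    (hoff : ∀ i j, i ≠ j → a i j ≤ 0) (hzero : ∀ i j, a i j = 0 ↔ a j i = 0)
    {i j : Fin n} (h : (SimpleGraph.fromRel fun i j : Fin n => a i j ≠ 0).Adj i j) :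
    r a i j * r a j i = 1 := by
  obtain ⟨h1, h2⟩ := entries_neg hoff hzero h
  have h1' : (a i j : ℚ) ≠ 0 := by exact_mod_cast h1.ne
  have h2' : (a j i : ℚ) ≠ 0 := by exact_mod_cast h2.ne
  rw [r, r, div_mul_div_comm, mul_comm (a i j : ℚ), div_self (mul_ne_zero h2' h1')]

theorem wt_pos {a : Fin n → Fin n → ℤ}
    (hoff : ∀ i j, i ≠ j → a i j ≤ 0) (hzero : ∀ i j, a i j = 0 ↔ a j i = 0)
    {u v : Fin n} (p : (SimpleGraph.fromRel fun i j : Fin n => a i j ≠ 0).Walk u v) :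
    0 < wt a p := by
  induction p with
  | nil => norm_num [wt_nil]
  | cons h p ih => rw [wt_cons]; exact mul_pos (r_pos hoff hzero h) ih

/-- Key lemma: for two paths from a common source to adjacent vertices. -/
theorem wt_adj {a : Fin n → Fin n → ℤ}
    (hoff : ∀ i j, i ≠ j → a i j ≤ 0) (hzero : ∀ i j, a i j = 0 ↔ a j i = 0)
    (hforest : (SimpleGraph.fromRel fun i j : Fin n => a i j ≠ 0).IsAcyclic)
    {s i j : Fin n} (h : (SimpleGraph.fromRel fun i j : Fin n => a i j ≠ 0).Adj i j)
    (p : (SimpleGraph.fromRel fun i j : Fin n => a i j ≠ 0).Walk s i)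
    (q : (SimpleGraph.fromRel fun i j : Fin n => a i j ≠ 0).Walk s j)
    (hp : p.IsPath) (hq : q.IsPath) :
    wt a q = wt a p * r a i j := by
  have unique := (SimpleGraph.isAcyclic_iff_path_unique).mp hforest
  by_cases hj : j ∈ p.support
  · -- q equals p.takeUntil j, and p.dropUntil j is the single edge j—i
    have h1 : (p.takeUntil j hj).IsPath := hp.takeUntil hj
    have h2 : (p.dropUntil j hj).IsPath := hp.dropUntil hj
    have hq' : q = p.takeUntil j hj := by
      have := unique ⟨q, hq⟩ ⟨p.takeUntil j hj, h1⟩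
      exact congrArg Subtype.val this
    have hd : p.dropUntil j hj = Walk.cons h.symm Walk.nil := by
      have := unique ⟨p.dropUntil j hj, h2⟩ (SimpleGraph.Path.singleton h.symm)
      exact congrArg Subtype.val this
    have hspec := p.take_spec hj
    have : wt a p = wt a (p.takeUntil j hj) * wt a (p.dropUntil j hj) := by
      conv_lhs => rw [← hspec]
      exact wt_append a _ _
    rw [hd, wt_cons, wt_nil, mul_one] at this
    rw [hq', this]
    rw [mul_assoc, mul_comm (r a j i), r_mul_r hoff hzero h, mul_one]
  · -- p.concat h is a path, equal to q
    have hcp : (p.concat h).IsPath := by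
      rw [← Walk.isPath_reverse_iff, Walk.reverse_concat]
      rw [Walk.cons_isPath_iff]
      refine ⟨hp.reverse, ?_⟩
      rwa [Walk.support_reverse, List.mem_reverse]
    have hq' : q = p.concat h := by
      have := unique ⟨q, hq⟩ ⟨p.concat h, hcp⟩
      exact congrArg Subtype.val this
    rw [hq', wt_concat]

end Stmt13Aux

/-- A generalized Cartan matrix whose Dynkin diagram has no cycle (is a forest)
is symmetrizable. -/
theorem stmt13 {n : ℕ} (a : Fin n → Fin n → ℤ)
    (hdiag : ∀ i, a i i = 2)
    (hoff : ∀ i j, i ≠ j → a i j ≤ 0)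
    (hzero : ∀ i j, a i j = 0 ↔ a j i = 0)
    (hforest : (SimpleGraph.fromRel fun i j : Fin n => a i j ≠ 0).IsAcyclic) :
    ∃ d : Fin n → ℚ, (∀ i, 0 < d i) ∧ ∀ i j, d i * a i j = d j * a j i := by
  classical
  set G := SimpleGraph.fromRel fun i j : Fin n => a i j ≠ 0 with hG
  let root : Fin n → Fin n := fun i => (G.connectedComponentMk i).out
  have reach : ∀ i, G.Reachable (root i) i := fun i =>
    SimpleGraph.ConnectedComponent.exact ((G.connectedComponentMk i).out_eq)
  let pathTo : ∀ i, G.Walk (root i) i := fun i => (reach i).some.bypass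
  have hpathTo : ∀ i, (pathTo i).IsPath := fun i => SimpleGraph.Walk.bypass_isPath _
  refine ⟨fun i => Stmt13Aux.wt a (pathTo i), fun i => Stmt13Aux.wt_pos hoff hzero _, ?_⟩
  intro i j
  by_cases hij : i = j
  · subst hij; ring
  by_cases hz : a i j = 0
  · have hz' : a j i = 0 := (hzero i j).mp hz
    rw [hz, hz']; push_cast; ring
  · have hadj : G.Adj i j := by
      rw [hG, SimpleGraph.fromRel_adj]
      exact ⟨hij, Or.inl hz⟩
    have hroot : root j = root i :=
      congrArg Quot.out (SimpleGraph.ConnectedComponent.sound hadj.reachable.symm)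
    have hq : ((pathTo j).copy hroot rfl).IsPath := (SimpleGraph.Walk.isPath_copy _ _ _).mpr (hpathTo j)
    have key := Stmt13Aux.wt_adj hoff hzero hforest hadj (pathTo i)
      ((pathTo j).copy hroot rfl) (hpathTo i) hq
    rw [Stmt13Aux.wt_copy] at key
    simp only [key]
    have h2 : a j i ≠ 0 := fun hh => hz ((hzero j i).mp hh)
    have h2' : (a j i : ℚ) ≠ 0 := by exact_mod_cast h2
    rw [Stmt13Aux.r]
    field_simp
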